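/- Let N ≥ 1, let r_1 ≤ … ≤ r_N and b_1 ≤ … ≤ b_N be real numbers, and let f : [0,∞) → ℝ be convex and nondecreasing. Then the criss-cross Hamiltonian cycle is optimal: for every pair of permutations (σ,π) ∈ S_N × S_N one has E(σ̃,π̃) ≤ E(σ,π). -/

import Mathlib

/-- The criss-cross permutation σ̃ of {1,…,N}, written 0-indexed: position `i`
(1-indexed `i+1`) is sent to `2*i` when `2*i < N` (1-indexed: `σ̃(j)=2j-1` for
`j ≤ (N+1)/2`) and to `2*(N-1-i)+1` otherwise (1-indexed: `σ̃(j)=2N-2j+2` for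
`j > (N+1)/2`). -/
noncomputable def sigmaTilde (N : ℕ) : Equiv.Perm (Fin N) :=
  Equiv.ofBijective
    (fun i => if h : 2 * i.val < N then ⟨2 * i.val, h⟩
      else ⟨2 * (N - 1 - i.val) + 1, by have := i.isLt; omega⟩)
    (Finite.injective_iff_bijective.mp (by
      intro a b hab
      have ha := a.isLt; have hb := b.isLt
      by_cases h1 : 2 * a.val < N <;> by_cases h2 : 2 * b.val < N <;>
        simp only [h1, h2, dif_pos, dif_neg, not_false_iff, Fin.mk.injEq, Fin.ext_iff] at hab ⊢ <;>
        omega))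

/-- The criss-cross permutation π̃ = σ̃ ∘ I, where `I = Fin.revPerm` is the inversion
`I(j) = N+1-j` (0-indexed: `i ↦ N-1-i`).  Here `(f * g) i = f (g i)`. -/
noncomputable def piTilde (N : ℕ) : Equiv.Perm (Fin N) := sigmaTilde N * Fin.revPerm

/-- The cost `E(σ,π)` of the Hamiltonian cycle of `K_{N,N}` encoded by the pair of
permutations `(σ,π)`: red points `r`, blue points `b`, edge cost `f` applied to the
Euclidean distance, and `τ = finRotate N` the left rotation `τ(i)=i+1 (mod N)`. -/
noncomputable def cycleCost (N : ℕ) (r b : Fin N → ℝ) (f : ℝ → ℝ)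
    (σ π : Equiv.Perm (Fin N)) : ℝ :=
  ∑ i : Fin N, (f |r (σ i) - b (π i)| + f |r (σ (finRotate N i)) - b (π i)|)

open Finset


/-- convexity of `x ↦ f |x|` -/
private lemma ccAbsConvex (f : ℝ → ℝ) (hconv : ConvexOn ℝ (Set.Ici 0) f)
    (hmono : MonotoneOn f (Set.Ici 0)) : ConvexOn ℝ Set.univ (fun x => f |x|) := by
  refine ⟨convex_univ, fun x _ y _ a c ha hc hac => ?_⟩
  simp only [smul_eq_mul]
  have h1 : |a * x + c * y| ≤ a * |x| + c * |y| := by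
    calc |a * x + c * y| ≤ |a * x| + |c * y| := abs_add_le _ _
      _ = a * |x| + c * |y| := by rw [abs_mul, abs_mul, abs_of_nonneg ha, abs_of_nonneg hc]
  have h2 : f |a * x + c * y| ≤ f (a * |x| + c * |y|) :=
    hmono (Set.mem_Ici.mpr (abs_nonneg _)) (Set.mem_Ici.mpr (by positivity)) h1
  have h3 := hconv.2 (Set.mem_Ici.mpr (abs_nonneg x)) (Set.mem_Ici.mpr (abs_nonneg y)) ha hc hac
  simp only [smul_eq_mul] at h3
  exact h2.trans h3

private lemma ccConvexPair {g : ℝ → ℝ} (hg : ConvexOn ℝ Set.univ g)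
    {u u' v' v : ℝ} (h1 : u ≤ u') (h2 : u' ≤ v) (h3 : u ≤ v') (h4 : v' ≤ v)
    (hsum : u' + v' = u + v) : g u' + g v' ≤ g u + g v := by
  have hv0 : v' = u + v - u' := by linarith
  subst hv0
  rcases eq_or_lt_of_le (h1.trans h2) with heq | hlt
  · have hu : u' = u := le_antisymm (heq ▸ h2) h1
    rw [hu, show u + v - u = v from by ring]
  · have hdpos : (0:ℝ) < v - u := by linarith
    have ha : 0 ≤ (v - u') / (v - u) := div_nonneg (by linarith) hdpos.le
    have hc : 0 ≤ (u' - u) / (v - u) := div_nonneg (by linarith) hdpos.le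
    have hac : (v - u') / (v - u) + (u' - u) / (v - u) = 1 := by
      rw [← add_div]; field_simp; ring
    have e1 := hg.2 (Set.mem_univ u) (Set.mem_univ v) ha hc hac
    have e2 := hg.2 (Set.mem_univ u) (Set.mem_univ v) hc ha (by linarith)
    simp only [smul_eq_mul] at e1 e2
    have hu' : (v - u') / (v - u) * u + (u' - u) / (v - u) * v = u' := by
      field_simp; ring
    have hv' : (u' - u) / (v - u) * u + (v - u') / (v - u) * v = u + v - u' := by
      field_simp; ring
    rw [hu'] at e1; rw [hv'] at e2
    have key : (v - u') / (v - u) * g u + (u' - u) / (v - u) * g v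
        + ((u' - u) / (v - u) * g u + (v - u') / (v - u) * g v) = g u + g v := by
      linear_combination (g u + g v) * hac
    linarith [e1, e2]

private def ccG (F : ℕ → ℕ → ℝ) (a c : ℕ) : ℝ := F a c + F c a - F a a - F c c

private def ccDel (F : ℕ → ℕ → ℝ) (k : ℕ) : ℝ := ccG F k (k + 1)

section withM
variable {F : ℕ → ℕ → ℝ}
  (hM : ∀ a a' c c' : ℕ, a ≤ a' → c ≤ c' → F a c + F a' c' ≤ F a c' + F a' c)
include hM

private lemma ccG_nonneg {a c : ℕ} (h : a ≤ c) : 0 ≤ ccG F a c := by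
  have := hM a c a c h h
  unfold ccG; linarith

private lemma ccDel_nonneg (k : ℕ) : 0 ≤ ccDel F k := ccG_nonneg hM (Nat.le_succ k)

private lemma ccG_super {a s c : ℕ} (has : a ≤ s) (hsc : s ≤ c) :
    ccG F a s + ccG F s c ≤ ccG F a c := by
  have h1 := hM a s s c has hsc
  have h2 := hM s c a s hsc has
  unfold ccG; linarith

private lemma ccChain {a : ℕ} (c : ℕ) (hac : a ≤ c) :
    ∑ k ∈ Ico a c, ccDel F k ≤ ccG F a c := by
  induction c, hac using Nat.le_induction with
  | base => simp [ccG]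
  | succ c hc ih =>
      rw [Finset.sum_Ico_succ_top hc]
      have h1 := ccG_super hM hc (Nat.le_succ c)
      unfold ccDel at *
      linarith

end withM

private def ccDm {n : ℕ} (μ : Equiv.Perm (Fin (n + 1))) : ℕ :=
  ∑ i : Fin (n + 1), (max i.val ((μ i).val) - min i.val ((μ i).val))

private def ccCov {n : ℕ} (μ : Equiv.Perm (Fin (n + 1))) (k : ℕ) : Prop :=
  ∃ i : Fin (n + 1), min i.val ((μ i).val) ≤ k ∧ k < max i.val ((μ i).val)

private instance {n : ℕ} (μ : Equiv.Perm (Fin (n + 1))) (k : ℕ) : Decidable (ccCov μ k) := by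
  unfold ccCov; infer_instance

private lemma ccSplit {n : ℕ} {M : Type*} [AddCommMonoid M] {j m : Fin (n + 1)} (hmj : m ≠ j)
    (g : Fin (n + 1) → M) :
    ∑ i : Fin (n + 1), g i = g j + g m + ∑ i ∈ (univ.erase j).erase m, g i := by
  rw [← Finset.add_sum_erase _ g (mem_univ j),
    ← Finset.add_sum_erase _ g (Finset.mem_erase.mpr ⟨hmj, mem_univ m⟩), ← add_assoc]

private lemma ccKey {n : ℕ} {F : ℕ → ℕ → ℝ}
    (hM : ∀ a a' c c' : ℕ, a ≤ a' → c ≤ c' → F a c + F a' c' ≤ F a c' + F a' c) :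
    ∀ d (μ : Equiv.Perm (Fin (n + 1))), ccDm μ ≤ d →
      (∑ i : Fin (n + 1), F i.val i.val)
        + ∑ k ∈ range n, (if ccCov μ k then ccDel F k else 0)
        ≤ ∑ i : Fin (n + 1), F i.val ((μ i).val) := by
  have idcase : ∀ (μ : Equiv.Perm (Fin (n + 1))), (∀ i, μ i = i) →
      (∑ i : Fin (n + 1), F i.val i.val)
        + ∑ k ∈ range n, (if ccCov μ k then ccDel F k else 0)
        ≤ ∑ i : Fin (n + 1), F i.val ((μ i).val) := by
    intro μ hid
    have h1 : ∑ i : Fin (n + 1), F i.val ((μ i).val) = ∑ i : Fin (n + 1), F i.val i.val :=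
      Finset.sum_congr rfl (fun i _ => by rw [hid i])
    have h2 : ∑ k ∈ range n, (if ccCov μ k then ccDel F k else 0) = 0 := by
      apply Finset.sum_eq_zero
      intro k _
      rw [if_neg]
      rintro ⟨i, hik1, hik2⟩
      rw [hid i] at hik1 hik2
      omega
    rw [h1, h2, add_zero]
  intro d
  induction d with
  | zero =>
      intro μ hD
      apply idcase
      intro i
      have h0 : ccDm μ = 0 := Nat.le_zero.mp hD
      have := (Finset.sum_eq_zero_iff.mp h0) i (mem_univ i)
      exact Fin.ext (by omega)
  | succ d ih =>
      intro μ hD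
      by_cases hid : ∀ i, μ i = i
      · exact idcase μ hid
      push_neg at hid
      obtain ⟨i0, hi0⟩ := hid
      set S : Finset (Fin (n + 1)) := univ.filter (fun i => μ i ≠ i) with hSdef
      have hS : S.Nonempty := ⟨i0, by simp [hSdef, hi0]⟩
      set j := S.min' hS with hjdef
      have hj : μ j ≠ j := by
        have := S.min'_mem hS
        simpa [hSdef] using this
      have hmin : ∀ x : Fin (n + 1), x < j → μ x = x := by
        intro x hx
        by_contra hxx
        exact absurd (S.min'_le x (by simp [hSdef, hxx])) (not_le.mpr hx)
      have hjlt : j.val < (μ j).val := by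
        rcases lt_trichotomy ((μ j).val) j.val with h | h | h
        · have h2 : μ (μ j) = μ j := hmin _ (Fin.lt_def.mpr h)
          exact absurd (μ.injective h2) hj
        · exact absurd (Fin.ext h) hj
        · exact h
      set m := μ.symm j with hmdef
      have hm : μ m = j := μ.apply_symm_apply j
      have hmj : m ≠ j := fun h => hj (by rw [← h, hm]; exact h.symm)
      have hjm : j.val < m.val := by
        rcases lt_trichotomy m.val j.val with h | h | h
        · have h2 : μ m = m := hmin m (Fin.lt_def.mpr h)
          rw [hm] at h2
          exact absurd h2.symm hmj
        · exact absurd (Fin.ext h) hmj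
        · exact h
      set μ' := μ * Equiv.swap j m with hμ'def
      have hp1 : μ' j = j := by
        rw [hμ'def, Equiv.Perm.mul_apply, Equiv.swap_apply_left, hm]
      have hp2 : μ' m = μ j := by
        rw [hμ'def, Equiv.Perm.mul_apply, Equiv.swap_apply_right]
      have hp3 : ∀ i, i ≠ j → i ≠ m → μ' i = μ i := fun i h1 h2 => by
        rw [hμ'def, Equiv.Perm.mul_apply, Equiv.swap_apply_of_ne_of_ne h1 h2]
      set t := min m.val ((μ j).val) with htdef
      have hjt : j.val < t := lt_min hjm hjlt
      have htn : t ≤ n := le_trans (min_le_left _ _) (Nat.lt_succ_iff.mp m.isLt)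
      -- measure decrease
      have hDm' : ccDm μ' < ccDm μ := by
        have e1 := ccSplit hmj (fun i => max i.val ((μ i).val) - min i.val ((μ i).val))
        have e2 := ccSplit hmj (fun i => max i.val ((μ' i).val) - min i.val ((μ' i).val))
        have tl : ∑ i ∈ (univ.erase j).erase m,
              (max i.val ((μ' i).val) - min i.val ((μ' i).val))
            = ∑ i ∈ (univ.erase j).erase m,
              (max i.val ((μ i).val) - min i.val ((μ i).val)) := by
          apply Finset.sum_congr rfl
          intro i hi
          rw [hp3 i (Finset.mem_erase.mp (Finset.mem_erase.mp hi).2).1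
            (Finset.mem_erase.mp hi).1]
        unfold ccDm
        rw [e1, e2, tl, hp1, hp2]
        omega
      -- cost decomposition
      have hc1 := ccSplit hmj (fun i => F i.val ((μ i).val))
      have hc2 := ccSplit hmj (fun i => F i.val ((μ' i).val))
      have tl2 : ∑ i ∈ (univ.erase j).erase m, F i.val ((μ' i).val)
          = ∑ i ∈ (univ.erase j).erase m, F i.val ((μ i).val) := by
        apply Finset.sum_congr rfl
        intro i hi
        rw [hp3 i (Finset.mem_erase.mp (Finset.mem_erase.mp hi).2).1
          (Finset.mem_erase.mp hi).1]
      rw [hp1, hp2] at hc2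
      -- Monge gain
      have hGle : ccG F j.val t ≤ F j.val ((μ j).val) + F m.val j.val
          - F j.val j.val - F m.val ((μ j).val) := by
        rcases le_total ((μ j).val) m.val with hcase | hcase
        · have ht : t = (μ j).val := min_eq_right hcase
          have h2 := hM ((μ j).val) m.val j.val ((μ j).val) hcase hjlt.le
          rw [ht]; unfold ccG; linarith
        · have ht : t = m.val := min_eq_left hcase
          have h2 := hM j.val m.val m.val ((μ j).val) hjm.le hcase
          rw [ht]; unfold ccG; linarith
      have hchain : ∑ k ∈ Ico j.val t, ccDel F k ≤ ccG F j.val t := ccChain hM t hjt.le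
      -- coverage transfer
      have hcov : ∀ k, ccCov μ k → ccCov μ' k ∨ (j.val ≤ k ∧ k < t) := by
        rintro k ⟨i, hik1, hik2⟩
        by_cases hij : i = j
        · subst hij
          by_cases hkt : k < t
          · right; omega
          · left
            refine ⟨m, ?_⟩
            rw [hp2]
            omega
        by_cases him : i = m
        · subst him
          rw [hm] at hik1 hik2
          by_cases hkt : k < t
          · right; omega
          · left
            refine ⟨m, ?_⟩
            rw [hp2]
            omega
        · exact Or.inl ⟨i, by rw [hp3 i hij him]; exact ⟨hik1, hik2⟩⟩
      -- sums over covered cuts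
      have hsum1 : ∑ k ∈ range n, (if ccCov μ k then ccDel F k else 0)
          ≤ (∑ k ∈ range n, (if ccCov μ' k then ccDel F k else 0))
            + ∑ k ∈ Ico j.val t, ccDel F k := by
        have step : ∑ k ∈ range n, (if ccCov μ k then ccDel F k else 0)
            ≤ ∑ k ∈ range n, ((if ccCov μ' k then ccDel F k else 0)
              + (if k ∈ Ico j.val t then ccDel F k else 0)) := by
          apply Finset.sum_le_sum
          intro k _
          have d1 : (0:ℝ) ≤ if ccCov μ' k then ccDel F k else 0 := by
            split_ifs; exacts [ccDel_nonneg hM k, le_refl 0]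
          have d2 : (0:ℝ) ≤ if k ∈ Ico j.val t then ccDel F k else 0 := by
            split_ifs; exacts [ccDel_nonneg hM k, le_refl 0]
          by_cases hck : ccCov μ k
          · rw [if_pos hck]
            rcases hcov k hck with h | h
            · rw [if_pos h]; linarith
            · rw [if_pos (Finset.mem_Ico.mpr h)]; linarith
          · rw [if_neg hck]; linarith
        rw [Finset.sum_add_distrib] at step
        have e3 : ∑ k ∈ range n, (if k ∈ Ico j.val t then ccDel F k else 0)
            = ∑ k ∈ Ico j.val t, ccDel F k := by
          rw [Finset.sum_ite_mem]
          congr 1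
          apply Finset.inter_eq_right.mpr
          intro x hx
          rw [Finset.mem_Ico] at hx
          exact Finset.mem_range.mpr (by omega)
        rw [e3] at step
        exact step
      have hIH := ih μ' (by omega)
      rw [ccSplit hmj (fun i => F i.val ((μ i).val)), hm]
      rw [ccSplit hmj (fun i => F i.val ((μ' i).val)), hp1, hp2] at hIH
      rw [tl2] at hIH
      linarith

private lemma ccRotVal {n : ℕ} (x : Fin (n + 1)) :
    (finRotate (n + 1) x).val = (x.val + 1) % (n + 1) := by
  rw [finRotate_succ_apply, Fin.val_add, Fin.val_one']
  conv_rhs => rw [Nat.add_mod, Nat.mod_eq_of_lt x.isLt]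

private lemma ccRotInvariant {n : ℕ} (S : Finset (Fin (n + 1)))
    (hS : ∀ y, y ∈ S ↔ finRotate (n + 1) y ∈ S) : S = ∅ ∨ S = univ := by
  by_cases he : S = ∅
  · exact Or.inl he
  right
  obtain ⟨y0, hy0⟩ := Finset.nonempty_iff_ne_empty.mpr he
  have hiter : ∀ m (y : Fin (n + 1)), y ∈ S →
      ((finRotate (n + 1))^[m] y) ∈ S ∧ ((finRotate (n + 1))^[m] y).val = (y.val + m) % (n + 1) := by
    intro m
    induction m with
    | zero =>
        intro y hy
        refine ⟨hy, ?_⟩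
        simp [Nat.mod_eq_of_lt y.isLt]
    | succ m ihm =>
        intro y hy
        obtain ⟨h1, h2⟩ := ihm y hy
        rw [Function.iterate_succ_apply']
        refine ⟨(hS _).mp h1, ?_⟩
        rw [ccRotVal, h2, Nat.mod_add_mod, ← Nat.add_assoc]
  apply Finset.eq_univ_iff_forall.mpr
  intro z
  obtain ⟨h1, h2⟩ := hiter ((n + 1) - y0.val + z.val) y0 hy0
  have hval : (y0.val + ((n + 1) - y0.val + z.val)) % (n + 1) = z.val := by
    have hy0lt := y0.isLt
    have hzlt := z.isLt
    rw [show y0.val + ((n + 1) - y0.val + z.val) = (n + 1) + z.val by omega]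
    rw [Nat.add_mod_left, Nat.mod_eq_of_lt hzlt]
  rw [hval] at h2
  rwa [show ((finRotate (n + 1))^[(n + 1) - y0.val + z.val] y0) = z from Fin.ext h2] at h1

private lemma ccCard {n k : ℕ} (hk : k ≤ n) (σ : Equiv.Perm (Fin (n + 1))) :
    (univ.filter (fun y : Fin (n + 1) => (σ y).val ≤ k)).card = k + 1 := by
  have step1 : (univ.filter (fun y : Fin (n + 1) => (σ y).val ≤ k)).card
      = (univ.filter (fun y : Fin (n + 1) => y.val ≤ k)).card := by
    apply Finset.card_bij (fun y _ => σ y)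
    · intro a ha
      simp only [mem_filter, mem_univ, true_and] at ha ⊢
      exact ha
    · intro a _ b _ h
      exact σ.injective h
    · intro bb hbb
      refine ⟨σ.symm bb, ?_, by simp⟩
      simp only [mem_filter, mem_univ, true_and] at hbb ⊢
      rw [σ.apply_symm_apply]
      exact hbb
  rw [step1, Finset.card_filter]
  rw [Fin.sum_univ_eq_sum_range (fun v => if v ≤ k then 1 else 0)]
  rw [← Finset.card_filter]
  rw [show (range (n + 1)).filter (fun v => v ≤ k) = range (k + 1) from by
    ext x; simp only [mem_filter, mem_range]; omega]
  exact Finset.card_range (k + 1)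

private lemma ccConn {n : ℕ} (σ π : Equiv.Perm (Fin (n + 1))) {k : ℕ} (hk : k < n) :
    ccCov (π * σ⁻¹) k ∨ ccCov (π * (finRotate (n + 1))⁻¹ * σ⁻¹) k := by
  by_contra hcon
  push_neg at hcon
  obtain ⟨h1, h2⟩ := hcon
  unfold ccCov at h1 h2
  push_neg at h1 h2
  have e1 : ∀ y : Fin (n + 1), ((σ y).val ≤ k ↔ (π y).val ≤ k) := by
    intro y
    have := h1 (σ y)
    have happ : (π * σ⁻¹) (σ y) = π y := by
      simp only [Equiv.Perm.mul_apply, Equiv.Perm.inv_def, Equiv.symm_apply_apply]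
    rw [happ] at this
    omega
  have e2 : ∀ y : Fin (n + 1), ((σ (finRotate (n + 1) y)).val ≤ k ↔ (π y).val ≤ k) := by
    intro y
    have := h2 (σ (finRotate (n + 1) y))
    have happ : (π * (finRotate (n + 1))⁻¹ * σ⁻¹) (σ (finRotate (n + 1) y)) = π y := by
      simp only [Equiv.Perm.mul_apply, Equiv.Perm.inv_def, Equiv.symm_apply_apply]
    rw [happ] at this
    omega
  set S : Finset (Fin (n + 1)) := univ.filter (fun y => (σ y).val ≤ k) with hSdef
  have hinv : ∀ y, y ∈ S ↔ finRotate (n + 1) y ∈ S := by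
    intro y
    simp only [hSdef, mem_filter, mem_univ, true_and]
    rw [e1 y, ← e2 y]
  have hcard : S.card = k + 1 := ccCard (by omega) σ
  rcases ccRotInvariant S hinv with h | h
  · rw [h] at hcard; simp at hcard
  · rw [h] at hcard
    rw [Finset.card_univ, Fintype.card_fin] at hcard
    omega

/-- 0-indexed value function of the criss-cross permutation. -/
private def ccSval (n x : ℕ) : ℕ := if 2 * x < n + 1 then 2 * x else 2 * (n - x) + 1

private lemma ccSig_val {n : ℕ} (i : Fin (n + 1)) :
    (sigmaTilde (n + 1) i).val = ccSval n i.val := by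
  unfold sigmaTilde ccSval
  rw [Equiv.ofBijective_apply]
  split_ifs with h
  · rfl
  · show 2 * (n + 1 - 1 - i.val) + 1 = 2 * (n - i.val) + 1
    omega

private lemma ccPit_val {n : ℕ} (i : Fin (n + 1)) :
    (piTilde (n + 1) i).val = ccSval n (n - i.val) := by
  unfold piTilde
  rw [Equiv.Perm.mul_apply]
  have hrev : (Fin.revPerm i : Fin (n + 1)).val = n - i.val := by
    rw [Fin.revPerm_apply, Fin.val_rev]; omega
  rw [show (Fin.revPerm i : Fin (n + 1)) = ⟨n - i.val, by omega⟩ from Fin.ext hrev]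
  rw [ccSig_val]

/-- pairing function: pairs `k ↔ k+1` for `k ≡ ρ (mod 2)`. -/
private def nfP (ρ n k : ℕ) : ℕ :=
  if k % 2 = ρ % 2 then (if k + 1 ≤ n then k + 1 else k) else k - 1

private noncomputable def nuP (ρ n : ℕ) : Equiv.Perm (Fin (n + 1)) :=
  Function.Involutive.toPerm
    (fun i => ⟨nfP ρ n i.val, by have := i.isLt; unfold nfP; split_ifs <;> omega⟩)
    (by
      intro i
      apply Fin.ext
      have := i.isLt
      show nfP ρ n (nfP ρ n i.val) = i.val
      unfold nfP
      split_ifs <;> omega)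

private lemma nuP_val (ρ n : ℕ) (i : Fin (n + 1)) : (nuP ρ n i).val = nfP ρ n i.val := rfl

private lemma ccPE {n : ℕ} (i : Fin (n + 1)) :
    piTilde (n + 1) i = nuP 0 n (sigmaTilde (n + 1) i) := by
  apply Fin.ext
  rw [ccPit_val, nuP_val, ccSig_val]
  have := i.isLt
  unfold ccSval nfP
  split_ifs <;> omega

private lemma ccPO {n : ℕ} (i : Fin (n + 1)) :
    piTilde (n + 1) i = nuP 1 n (sigmaTilde (n + 1) (finRotate (n + 1) i)) := by
  apply Fin.ext
  rw [ccPit_val, nuP_val, ccSig_val, ccRotVal]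
  have hlt := i.isLt
  by_cases hi : i.val = n
  · rw [hi, Nat.mod_self]
    unfold ccSval nfP
    split_ifs <;> first | omega | exact (‹False›).elim
  · rw [Nat.mod_eq_of_lt (by omega)]
    unfold ccSval nfP
    split_ifs <;> omega

private lemma ccPairSum {n : ℕ} (F : ℕ → ℕ → ℝ) (ρ : ℕ) (hρ : ρ < 2) :
    ∑ k ∈ range (n + 1), (F k (nfP ρ n k) - F k k)
      = ∑ k ∈ range n, (if k % 2 = ρ then ccDel F k else 0) := by
  set A : Finset ℕ := (range n).filter (fun k => k % 2 = ρ) with hA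
  have hsub : A ∪ A.image (· + 1) ⊆ range (n + 1) := by
    intro x hx
    rcases Finset.mem_union.mp hx with h | h
    · exact Finset.mem_range.mpr (by have := Finset.mem_range.mp (Finset.mem_filter.mp h).1; omega)
    · obtain ⟨a, ha, rfl⟩ := Finset.mem_image.mp h
      exact Finset.mem_range.mpr (by have := Finset.mem_range.mp (Finset.mem_filter.mp ha).1; omega)
  have hzero : ∀ x ∈ range (n + 1), x ∉ A ∪ A.image (· + 1) → F x (nfP ρ n x) - F x x = 0 := by
    intro x hx hxs
    have hxn := Finset.mem_range.mp hx
    rw [Finset.mem_union] at hxs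
    push_neg at hxs
    obtain ⟨hx1, hx2⟩ := hxs
    have hx1' : ¬(x % 2 = ρ ∧ x < n) := by
      intro ⟨ha1, ha2⟩
      exact hx1 (Finset.mem_filter.mpr ⟨Finset.mem_range.mpr ha2, ha1⟩)
    have hx2' : ¬(1 ≤ x ∧ (x - 1) % 2 = ρ ∧ x - 1 < n) := by
      intro ⟨ha0, ha1, ha2⟩
      exact hx2 (Finset.mem_image.mpr ⟨x - 1,
        Finset.mem_filter.mpr ⟨Finset.mem_range.mpr ha2, ha1⟩, by omega⟩)
    have hfix : nfP ρ n x = x := by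
      unfold nfP
      split_ifs <;> omega
    rw [hfix, sub_self]
  rw [← Finset.sum_subset hsub hzero]
  have hdisj : Disjoint A (A.image (· + 1)) := by
    rw [Finset.disjoint_left]
    intro x hx1 hx2
    obtain ⟨a, ha, rfl⟩ := Finset.mem_image.mp hx2
    have e1 := (Finset.mem_filter.mp hx1).2
    have e2 := (Finset.mem_filter.mp ha).2
    omega
  rw [Finset.sum_union hdisj]
  rw [Finset.sum_image (by intro x _ y _ h; simp only at h; omega)]
  rw [← Finset.sum_add_distrib]
  rw [show ∑ k ∈ A, ((F k (nfP ρ n k) - F k k) + (F (k + 1) (nfP ρ n (k + 1)) - F (k + 1) (k + 1)))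
      = ∑ k ∈ A, ccDel F k from Finset.sum_congr rfl (by
    intro k hk
    have h1 := Finset.mem_range.mp (Finset.mem_filter.mp hk).1
    have h2 := (Finset.mem_filter.mp hk).2
    have e1 : nfP ρ n k = k + 1 := by unfold nfP; split_ifs <;> omega
    have e2 : nfP ρ n (k + 1) = k := by unfold nfP; split_ifs <;> omega
    rw [e1, e2]
    unfold ccDel ccG
    ring)]
  rw [hA, Finset.sum_filter]

private lemma ccNuCost {n : ℕ} (F : ℕ → ℕ → ℝ) (ρ : ℕ) (hρ : ρ < 2) :
    ∑ i : Fin (n + 1), F i.val ((nuP ρ n i).val)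
      = (∑ i : Fin (n + 1), F i.val i.val)
        + ∑ k ∈ range n, (if k % 2 = ρ then ccDel F k else 0) := by
  have h1 : ∑ i : Fin (n + 1), F i.val ((nuP ρ n i).val)
      = ∑ i : Fin (n + 1), (fun v => F v (nfP ρ n v)) i.val :=
    Finset.sum_congr rfl (fun i _ => by rw [nuP_val])
  have h2 : ∑ i : Fin (n + 1), F i.val i.val = ∑ i : Fin (n + 1), (fun v => F v v) i.val := rfl
  rw [h1, h2, Fin.sum_univ_eq_sum_range (fun v => F v (nfP ρ n v)),
    Fin.sum_univ_eq_sum_range (fun v => F v v)]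
  have h3 := ccPairSum (n := n) F ρ hρ
  rw [Finset.sum_sub_distrib] at h3
  linarith

private noncomputable def ccF {n : ℕ} (r b : Fin (n + 1) → ℝ) (f : ℝ → ℝ) (a c : ℕ) : ℝ :=
  f |r ⟨min a n, by omega⟩ - b ⟨min c n, by omega⟩|

private lemma ccF_eq {n : ℕ} (r b : Fin (n + 1) → ℝ) (f : ℝ → ℝ) (i j : Fin (n + 1)) :
    ccF r b f i.val j.val = f |r i - b j| := by
  have e1 : r ⟨min i.val n, by omega⟩ = r i :=
    congrArg r (Fin.ext (Nat.min_eq_left (Nat.lt_succ_iff.mp i.isLt)))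
  have e2 : b ⟨min j.val n, by omega⟩ = b j :=
    congrArg b (Fin.ext (Nat.min_eq_left (Nat.lt_succ_iff.mp j.isLt)))
  unfold ccF
  rw [e1, e2]

private lemma ccF_monge {n : ℕ} (r b : Fin (n + 1) → ℝ) (f : ℝ → ℝ)
    (hr : Monotone r) (hb : Monotone b)
    (hconv : ConvexOn ℝ (Set.Ici 0) f) (hmono : MonotoneOn f (Set.Ici 0)) :
    ∀ a a' c c' : ℕ, a ≤ a' → c ≤ c' →
      ccF r b f a c + ccF r b f a' c' ≤ ccF r b f a c' + ccF r b f a' c := by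
  intro a a' c c' h1 h2
  have hg := ccAbsConvex f hconv hmono
  have hrr : r ⟨min a n, by omega⟩ ≤ r ⟨min a' n, by omega⟩ :=
    hr (Fin.mk_le_mk.mpr (by omega))
  have hbb : b ⟨min c n, by omega⟩ ≤ b ⟨min c' n, by omega⟩ :=
    hb (Fin.mk_le_mk.mpr (by omega))
  exact ccConvexPair hg (by linarith) (by linarith) (by linarith) (by linarith) (by ring)

private lemma ccDecomp {n : ℕ} (r b : Fin (n + 1) → ℝ) (f : ℝ → ℝ)
    (σ π : Equiv.Perm (Fin (n + 1))) :
    cycleCost (n + 1) r b f σ π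
      = (∑ i : Fin (n + 1), f |r i - b ((π * σ⁻¹) i)|)
        + ∑ i : Fin (n + 1), f |r i - b ((π * (finRotate (n + 1))⁻¹ * σ⁻¹) i)| := by
  unfold cycleCost
  rw [Finset.sum_add_distrib]
  congr 1
  · rw [← Equiv.sum_comp σ (fun x => f |r x - b ((π * σ⁻¹) x)|)]
    apply Finset.sum_congr rfl
    intro i _
    simp only [Equiv.Perm.mul_apply, Equiv.Perm.inv_def, Equiv.symm_apply_apply]
  · rw [← Equiv.sum_comp ((finRotate (n + 1)).trans σ)
      (fun x => f |r x - b ((π * (finRotate (n + 1))⁻¹ * σ⁻¹) x)|)]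
    apply Finset.sum_congr rfl
    intro i _
    simp only [Equiv.trans_apply, Equiv.Perm.mul_apply, Equiv.Perm.inv_def, Equiv.symm_apply_apply]

private lemma ccCrissPerm1 {n : ℕ} :
    piTilde (n + 1) * (sigmaTilde (n + 1))⁻¹ = nuP 0 n := by
  apply Equiv.ext
  intro x
  rw [Equiv.Perm.mul_apply, ccPE ((sigmaTilde (n + 1))⁻¹ x), Equiv.Perm.inv_def, Equiv.apply_symm_apply]

private lemma ccCrissPerm2 {n : ℕ} :
    piTilde (n + 1) * (finRotate (n + 1))⁻¹ * (sigmaTilde (n + 1))⁻¹ = nuP 1 n := by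
  apply Equiv.ext
  intro x
  rw [Equiv.Perm.mul_apply, Equiv.Perm.mul_apply,
    ccPO ((finRotate (n + 1))⁻¹ ((sigmaTilde (n + 1))⁻¹ x)),
    Equiv.Perm.inv_def, Equiv.Perm.inv_def, Equiv.apply_symm_apply, Equiv.apply_symm_apply]


/-- **Optimality of the criss-cross cycle.**  For `N ≥ 1`, nondecreasingly ordered red
points `r` and blue points `b` in ℝ, and a convex nondecreasing cost function `f` on
`[0,∞)`, the criss-cross Hamiltonian cycle `(σ̃, π̃)` is optimal: every pair of
permutations `(σ, π)` has cost at least `E(σ̃, π̃)`. -/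
theorem crisscross_optimal (N : ℕ) (hN : 1 ≤ N) (r b : Fin N → ℝ)
    (hr : Monotone r) (hb : Monotone b) (f : ℝ → ℝ)
    (hconv : ConvexOn ℝ (Set.Ici 0) f) (hmono : MonotoneOn f (Set.Ici 0))
    (σ π : Equiv.Perm (Fin N)) :
    cycleCost N r b f (sigmaTilde N) (piTilde N) ≤ cycleCost N r b f σ π := by
  obtain ⟨n, rfl⟩ : ∃ n, N = n + 1 := ⟨N - 1, by omega⟩
  set F : ℕ → ℕ → ℝ := ccF r b f with hF
  have hM := ccF_monge r b f hr hb hconv hmono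
  have habs : ∀ (μ : Equiv.Perm (Fin (n + 1))),
      ∑ i : Fin (n + 1), f |r i - b (μ i)| = ∑ i : Fin (n + 1), F i.val ((μ i).val) :=
    fun μ => Finset.sum_congr rfl (fun i _ => (ccF_eq r b f i (μ i)).symm)
  -- value of the criss-cross cycle
  have hcriss : cycleCost (n + 1) r b f (sigmaTilde (n + 1)) (piTilde (n + 1))
      = (∑ i : Fin (n + 1), F i.val i.val) + (∑ i : Fin (n + 1), F i.val i.val)
        + ∑ k ∈ range n, ccDel F k := by
    rw [ccDecomp, ccCrissPerm1, ccCrissPerm2, habs, habs,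
      ccNuCost F 0 (by omega), ccNuCost F 1 (by omega)]
    have hsplit : ∑ k ∈ range n, (if k % 2 = 0 then ccDel F k else 0)
        + ∑ k ∈ range n, (if k % 2 = 1 then ccDel F k else 0)
        = ∑ k ∈ range n, ccDel F k := by
      rw [← Finset.sum_add_distrib]
      apply Finset.sum_congr rfl
      intro k _
      rcases Nat.mod_two_eq_zero_or_one k with h | h <;> simp [h]
    linarith
  -- lower bound for the generic cycle
  set μ1 := π * σ⁻¹ with hμ1
  set μ2 := π * (finRotate (n + 1))⁻¹ * σ⁻¹ with hμ2
  have hgen : cycleCost (n + 1) r b f σ π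
      = (∑ i : Fin (n + 1), F i.val ((μ1 i).val))
        + ∑ i : Fin (n + 1), F i.val ((μ2 i).val) := by
    rw [ccDecomp, habs, habs]
  have hkey1 := ccKey hM (ccDm μ1) μ1 le_rfl
  have hkey2 := ccKey hM (ccDm μ2) μ2 le_rfl
  have hconnsum : ∑ k ∈ range n, ccDel F k
      ≤ (∑ k ∈ range n, (if ccCov μ1 k then ccDel F k else 0))
        + ∑ k ∈ range n, (if ccCov μ2 k then ccDel F k else 0) := by
    rw [← Finset.sum_add_distrib]
    apply Finset.sum_le_sum
    intro k hk
    have hcc := ccConn σ π (Finset.mem_range.mp hk)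
    have d1 : (0:ℝ) ≤ if ccCov μ1 k then ccDel F k else 0 := by
      split_ifs; exacts [ccDel_nonneg hM k, le_refl 0]
    have d2 : (0:ℝ) ≤ if ccCov μ2 k then ccDel F k else 0 := by
      split_ifs; exacts [ccDel_nonneg hM k, le_refl 0]
    rcases hcc with h | h
    · rw [if_pos h]; linarith
    · rw [if_pos h]; linarith
  rw [hcriss, hgen]
  linarith
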